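/- Let r ≥ 1 be an integer and 0 < ε < 1/4. For all sufficiently large n, if G is a B_{r+1}-free simple graph on n vertices with e(G) ≥ (1/4 − ε)n², then the set L = {v ∈ V(G) : d(v) ≤ (1/2 − 4√ε)n} of low-degree vertices satisfies |L| ≤ √ε · n. -/

import Mathlib

open SimpleGraph Set

/-- `G` contains no book `B_{r+1}`, i.e. no two adjacent vertices of `G` have at least
`r + 1` common neighbours. -/
def BookFree {V : Type*} (r : ℕ) (G : SimpleGraph V) : Prop :=
  ∀ u v : V, G.Adj u v → ({w : V | G.Adj u w ∧ G.Adj v w}).ncard ≤ r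

open Finset in
lemma deg_sq_sum {V : Type*} [Fintype V] [DecidableEq V] (H : SimpleGraph V)
    [DecidableRel H.Adj] (c : ℕ)
    (hc : ∀ u v, H.Adj u v → H.degree u + H.degree v ≤ c) :
    2 * ∑ v, H.degree v ^ 2 ≤ c * ∑ v, H.degree v := by
  have hfil : ∀ v : V, H.neighborFinset v = Finset.univ.filter (H.Adj v) := by
    intro v; ext w; simp
  have swap : ∑ v, ∑ u ∈ H.neighborFinset v, H.degree u = ∑ v, H.degree v ^ 2 := by
    simp_rw [hfil, Finset.sum_filter]
    rw [Finset.sum_comm]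
    refine Finset.sum_congr rfl fun u _ => ?_
    have : ∀ v : V, (if H.Adj v u then H.degree u else 0)
        = (if H.Adj u v then H.degree u else 0) :=
      fun v => if_congr (H.adj_comm v u) rfl rfl
    rw [Finset.sum_congr rfl fun v _ => this v]
    simp_rw [← Finset.sum_filter, Finset.sum_const, ← hfil,
      card_neighborFinset_eq_degree, smul_eq_mul, sq]
  have key : ∑ v, ∑ u ∈ H.neighborFinset v, (H.degree v + H.degree u)
      ≤ ∑ v, ∑ _u ∈ H.neighborFinset v, c := by
    refine Finset.sum_le_sum fun v _ => Finset.sum_le_sum fun u hu => ?_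
    exact hc v u ((H.mem_neighborFinset v u).1 hu)
  calc 2 * ∑ v, H.degree v ^ 2
      = ∑ v, ∑ u ∈ H.neighborFinset v, (H.degree v + H.degree u) := by
        simp_rw [Finset.sum_add_distrib, Finset.sum_const,
          card_neighborFinset_eq_degree, smul_eq_mul, ← sq, swap]
        ring
    _ ≤ ∑ v, ∑ _u ∈ H.neighborFinset v, c := key
    _ = c * ∑ v, H.degree v := by
        simp_rw [Finset.sum_const, card_neighborFinset_eq_degree, smul_eq_mul,
          ← Finset.sum_mul]
        ring

open Finset in
lemma four_e_le {V : Type*} [Fintype V] [DecidableEq V] (H : SimpleGraph V)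
    [DecidableRel H.Adj] (S : Finset V) (c : ℕ)
    (h0 : ∀ v, v ∉ S → H.degree v = 0)
    (hc : ∀ u v, H.Adj u v → H.degree u + H.degree v ≤ c) :
    4 * H.edgeFinset.card ≤ S.card * c := by
  rcases Nat.eq_zero_or_pos H.edgeFinset.card with he | he
  · simp [he]
  -- Cauchy-Schwarz over S, in ℝ
  have hsum : ∑ v ∈ S, H.degree v = 2 * H.edgeFinset.card := by
    rw [← H.sum_degrees_eq_twice_card_edges]
    exact Finset.sum_subset (Finset.subset_univ S) (fun v _ hv => h0 v hv)
  have hCS : ((2 * H.edgeFinset.card : ℕ) : ℝ) ^ 2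
      ≤ (S.card : ℝ) * ∑ v ∈ S, (H.degree v : ℝ) ^ 2 := by
    rw [← hsum]
    push_cast
    exact sq_sum_le_card_mul_sum_sq
  have hsq : ∑ v ∈ S, (H.degree v : ℝ) ^ 2 ≤ (c : ℝ) * H.edgeFinset.card := by
    have h1 : 2 * ∑ v, H.degree v ^ 2 ≤ c * (2 * H.edgeFinset.card) := by
      rw [← H.sum_degrees_eq_twice_card_edges]; exact deg_sq_sum H c hc
    have h2 : ∑ v ∈ S, H.degree v ^ 2 ≤ ∑ v, H.degree v ^ 2 :=
      Finset.sum_le_sum_of_subset (Finset.subset_univ S)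
    have h1' : ∑ v, H.degree v ^ 2 ≤ c * H.edgeFinset.card := by
      refine Nat.le_of_mul_le_mul_left ?_ (by norm_num : 0 < 2)
      calc 2 * ∑ v, H.degree v ^ 2 ≤ c * (2 * H.edgeFinset.card) := h1
        _ = 2 * (c * H.edgeFinset.card) := by ring
    have h3 : ∑ v ∈ S, H.degree v ^ 2 ≤ c * H.edgeFinset.card := h2.trans h1'
    calc ∑ v ∈ S, (H.degree v : ℝ) ^ 2 = ((∑ v ∈ S, H.degree v ^ 2 : ℕ) : ℝ) := by
          push_cast; ring
      _ ≤ ((c * H.edgeFinset.card : ℕ) : ℝ) := by exact_mod_cast h3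
      _ = (c : ℝ) * H.edgeFinset.card := by push_cast; ring
  have hepos : (0:ℝ) < H.edgeFinset.card := by exact_mod_cast he
  have : (4 : ℝ) * H.edgeFinset.card ≤ (S.card : ℝ) * c := by
    have := hCS.trans (by
      have := mul_le_mul_of_nonneg_left hsq (by positivity : (0:ℝ) ≤ (S.card : ℝ))
      exact this)
    push_cast at this
    nlinarith
  exact_mod_cast this

set_option maxHeartbeats 1000000 in
/-- Let `r ≥ 1` and `0 < ε < 1/4`.  For all sufficiently large `n`: if `G` is a `B_{r+1}`-free
graph on `n` vertices with `e(G) ≥ (1/4 - ε)n²`, then the set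
`L = {v : d(v) ≤ (1/2 - 4√ε)n}` of low-degree vertices satisfies `|L| ≤ √ε·n`. -/
theorem stmt_8 (r : ℕ) (hr : 1 ≤ r) (ε : ℝ) (hε : 0 < ε) (hε' : ε < 1 / 4) :
    ∃ n₀ : ℕ, ∀ n : ℕ, n₀ ≤ n →
      ∀ G : SimpleGraph (Fin n), BookFree r G →
        (1 / 4 - ε) * (n : ℝ) ^ 2 ≤ (G.edgeSet.ncard : ℝ) →
        (({v : Fin n |
            ((G.neighborSet v).ncard : ℝ) ≤ (1 / 2 - 4 * Real.sqrt ε) * (n : ℝ)}).ncard : ℝ)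
          ≤ Real.sqrt ε * (n : ℝ) := by
  classical
  refine ⟨⌈((r : ℝ) + 2) / ε⌉₊ + 2, fun n hn G hBF hE => ?_⟩
  set s := Real.sqrt ε with hsdef
  have hs0 : 0 < s := Real.sqrt_pos.mpr hε
  have hs2 : s ^ 2 = ε := Real.sq_sqrt hε.le
  have hslt : s < 1 / 2 := by nlinarith
  have hn2 : 2 ≤ n := le_trans (by omega) hn
  have hnR : (2 : ℝ) ≤ (n : ℝ) := by exact_mod_cast hn2
  have hnr : (r : ℝ) + 2 ≤ ε * n := by
    have h1 : ⌈((r : ℝ) + 2) / ε⌉₊ ≤ n := by omega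
    have h2 : ((r : ℝ) + 2) / ε ≤ n := (Nat.ceil_le.mp h1)
    rw [div_le_iff₀ hε] at h2
    linarith [h2]
  -- identify the set with a finset
  have hdeg : ∀ v, (G.neighborSet v).ncard = G.degree v := by
    intro v
    rw [Set.ncard_eq_toFinset_card']
    simp [SimpleGraph.neighborFinset_def, SimpleGraph.degree]
  set L : Finset (Fin n) :=
    Finset.univ.filter (fun v => (G.degree v : ℝ) ≤ (1 / 2 - 4 * s) * n) with hLdef
  have hLset : {v : Fin n |
      ((G.neighborSet v).ncard : ℝ) ≤ (1 / 2 - 4 * s) * (n : ℝ)} = ↑L := by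
    ext v; simp [hLdef, hdeg v]
  rw [hLset, Set.ncard_coe_finset]
  by_contra hcon
  push_neg at hcon
  -- easy case: the degree bound is negative
  rcases lt_or_ge (1 / 2 - 4 * s) 0 with hα | hα
  · have hL0 : L = ∅ := by
      rw [Finset.eq_empty_iff_forall_notMem]
      intro v hv
      rw [hLdef, Finset.mem_filter] at hv
      have : (0 : ℝ) ≤ (G.degree v : ℝ) := by positivity
      nlinarith [hv.2]
    rw [hL0] at hcon
    simp at hcon
    nlinarith
  -- main case
  have hs8 : s ≤ 1 / 8 := by linarith
  set t : ℕ := ⌈s * n⌉₊ with htdef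
  have htL : t ≤ L.card := by
    rw [htdef, Nat.ceil_le]; exact hcon.le
  have htn : t ≤ n := by
    rw [htdef, Nat.ceil_le]
    nlinarith
  obtain ⟨L', hL'sub, hL'card⟩ := Finset.exists_subset_card_eq htL
  set S : Finset (Fin n) := L'ᶜ with hSdef
  have hScard : S.card = n - t := by
    rw [hSdef, Finset.card_compl, hL'card, Fintype.card_fin]
  -- the restricted graph
  set H : SimpleGraph (Fin n) :=
    { Adj := fun u v => G.Adj u v ∧ u ∈ S ∧ v ∈ S
      symm := ⟨fun u v (h : G.Adj u v ∧ u ∈ S ∧ v ∈ S) => ⟨h.1.symm, h.2.2, h.2.1⟩⟩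
      loopless := ⟨fun v h => G.loopless.irrefl v h.1⟩ } with hHdef
  letI : DecidableRel H.Adj := fun u v =>
    inferInstanceAs (Decidable (G.Adj u v ∧ u ∈ S ∧ v ∈ S))
  have hHadj : ∀ u v, H.Adj u v ↔ G.Adj u v ∧ u ∈ S ∧ v ∈ S := fun u v => Iff.rfl
  have h0 : ∀ v, v ∉ S → H.degree v = 0 := by
    intro v hv
    rw [← SimpleGraph.card_neighborFinset_eq_degree, Finset.card_eq_zero,
      Finset.eq_empty_iff_forall_notMem]
    intro w hw
    rw [SimpleGraph.mem_neighborFinset, hHadj] at hw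
    exact hv hw.2.1
  have hNsub : ∀ x, H.neighborFinset x ⊆ S := by
    intro x w hw
    rw [SimpleGraph.mem_neighborFinset, hHadj] at hw
    exact hw.2.2
  have hc : ∀ u v, H.Adj u v → H.degree u + H.degree v ≤ S.card + r := by
    intro u v huv
    have hint : (H.neighborFinset u ∩ H.neighborFinset v).card ≤ r := by
      have hsub : (↑(H.neighborFinset u ∩ H.neighborFinset v) : Set (Fin n))
          ⊆ {w : Fin n | G.Adj u w ∧ G.Adj v w} := by
        intro w hw
        simp only [Finset.coe_inter, Set.mem_inter_iff, Finset.mem_coe,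
          SimpleGraph.mem_neighborFinset] at hw
        exact ⟨hw.1.1, hw.2.1⟩
      calc (H.neighborFinset u ∩ H.neighborFinset v).card
          = (↑(H.neighborFinset u ∩ H.neighborFinset v) : Set (Fin n)).ncard := by
            rw [Set.ncard_coe_finset]
        _ ≤ ({w : Fin n | G.Adj u w ∧ G.Adj v w}).ncard :=
            Set.ncard_le_ncard hsub (Set.toFinite _)
        _ ≤ r := hBF u v huv.1
    have hun : (H.neighborFinset u ∪ H.neighborFinset v).card ≤ S.card :=
      Finset.card_le_card (Finset.union_subset (hNsub u) (hNsub v))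
    have hid := Finset.card_union_add_card_inter
      (H.neighborFinset u) (H.neighborFinset v)
    rw [← SimpleGraph.card_neighborFinset_eq_degree,
      ← SimpleGraph.card_neighborFinset_eq_degree]
    omega
  have hkey : 4 * H.edgeFinset.card ≤ S.card * (S.card + r) :=
    four_e_le H S (S.card + r) h0 hc
  -- degree sum comparison
  have hdec : ∀ v ∈ S, G.degree v ≤ H.degree v + (L'.filter (G.Adj v)).card := by
    intro v hv
    have : G.neighborFinset v ⊆ H.neighborFinset v ∪ L'.filter (G.Adj v) := by
      intro w hw
      rw [SimpleGraph.mem_neighborFinset] at hw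
      by_cases hwS : w ∈ S
      · exact Finset.mem_union_left _ (by
          rw [SimpleGraph.mem_neighborFinset, hHadj]; exact ⟨hw, hv, hwS⟩)
      · refine Finset.mem_union_right _ (Finset.mem_filter.mpr ⟨?_, hw⟩)
        rw [hSdef, Finset.mem_compl, not_not] at hwS
        exact hwS
    calc G.degree v = (G.neighborFinset v).card :=
          (SimpleGraph.card_neighborFinset_eq_degree G v).symm
      _ ≤ (H.neighborFinset v ∪ L'.filter (G.Adj v)).card := Finset.card_le_card this
      _ ≤ (H.neighborFinset v).card + (L'.filter (G.Adj v)).card :=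
          Finset.card_union_le _ _
      _ = H.degree v + (L'.filter (G.Adj v)).card := by
          rw [SimpleGraph.card_neighborFinset_eq_degree]
  have hdouble : ∑ v ∈ S, (L'.filter (G.Adj v)).card ≤ ∑ u ∈ L', G.degree u := by
    have : ∀ v ∈ S, (L'.filter (G.Adj v)).card = ∑ u ∈ L', ite (G.Adj v u) 1 0 := by
      intro v _
      rw [Finset.card_filter]
    rw [Finset.sum_congr rfl this, Finset.sum_comm]
    refine Finset.sum_le_sum fun u _ => ?_
    have hcomm : ∀ v : Fin n, (if G.Adj v u then 1 else 0) = (if G.Adj u v then 1 else 0) :=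
      fun v => if_congr (G.adj_comm v u) rfl rfl
    calc ∑ v ∈ S, (if G.Adj v u then 1 else 0)
        ≤ ∑ v, (if G.Adj v u then 1 else 0) := by
          refine Finset.sum_le_sum_of_subset_of_nonneg (Finset.subset_univ S) ?_
          intros; positivity
      _ = ∑ v, (if G.Adj u v then 1 else 0) := Finset.sum_congr rfl fun v _ => hcomm v
      _ = (Finset.univ.filter (G.Adj u)).card := (Finset.card_filter _ _).symm
      _ = G.degree u := by
          rw [← SimpleGraph.card_neighborFinset_eq_degree, SimpleGraph.neighborFinset_eq_filter]
  have hsumGH : ∑ v, G.degree v ≤ ∑ v, H.degree v + 2 * ∑ u ∈ L', G.degree u := by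
    have hsplit : ∑ v, G.degree v = ∑ v ∈ S, G.degree v + ∑ v ∈ L', G.degree v := by
      rw [hSdef]
      exact (Finset.sum_compl_add_sum L' _).symm
    have hHsum : ∑ v ∈ S, H.degree v ≤ ∑ v, H.degree v :=
      Finset.sum_le_sum_of_subset (Finset.subset_univ S)
    have h1 : ∑ v ∈ S, G.degree v
        ≤ ∑ v ∈ S, H.degree v + ∑ v ∈ S, (L'.filter (G.Adj v)).card := by
      rw [← Finset.sum_add_distrib]
      exact Finset.sum_le_sum hdec
    omega
  -- pass to reals
  have hecard : (G.edgeSet.ncard : ℝ) = (G.edgeFinset.card : ℝ) := by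
    simp [Set.ncard_eq_toFinset_card', SimpleGraph.edgeFinset]
  rw [hecard] at hE
  have hGsum : ∑ v, G.degree v = 2 * G.edgeFinset.card :=
    SimpleGraph.sum_degrees_eq_twice_card_edges G
  have hHsum : ∑ v, H.degree v = 2 * H.edgeFinset.card :=
    SimpleGraph.sum_degrees_eq_twice_card_edges H
  -- bound on L' degree sum
  have hL'deg : ((∑ u ∈ L', G.degree u : ℕ) : ℝ) ≤ (t : ℝ) * ((1 / 2 - 4 * s) * n) := by
    push_cast
    calc ∑ u ∈ L', (G.degree u : ℝ) ≤ ∑ _u ∈ L', (1 / 2 - 4 * s) * n := by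
          refine Finset.sum_le_sum fun u hu => ?_
          have := hL'sub hu
          rw [hLdef, Finset.mem_filter] at this
          exact this.2
      _ = (L'.card : ℝ) * ((1 / 2 - 4 * s) * n) := by rw [Finset.sum_const]; ring
      _ = (t : ℝ) * ((1 / 2 - 4 * s) * n) := by rw [hL'card]
  -- final arithmetic
  have hx1 : s * n ≤ (t : ℝ) := Nat.le_ceil _
  have hx2 : (t : ℝ) ≤ s * n + 1 := by
    have := Nat.ceil_lt_add_one (by positivity : (0:ℝ) ≤ s * n)
    exact this.le
  have hxn : (t : ℝ) ≤ n := by exact_mod_cast htn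
  have hSr : ((S.card : ℕ) : ℝ) = (n : ℝ) - (t:ℝ) := by
    rw [hScard]; push_cast [htn]; ring
  have hEH : (G.edgeFinset.card : ℝ)
      ≤ (H.edgeFinset.card : ℝ) + (∑ u ∈ L', G.degree u : ℕ) := by
    have : (2 : ℝ) * G.edgeFinset.card
        ≤ 2 * H.edgeFinset.card + 2 * (∑ u ∈ L', G.degree u : ℕ) := by
      rw_mod_cast [← hGsum, ← hHsum]
      exact_mod_cast hsumGH
    linarith
  have hkeyR : 4 * (H.edgeFinset.card : ℝ) ≤ ((n : ℝ) - (t:ℝ)) * (((n : ℝ) - (t:ℝ)) + r) := by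
    have h4 : ((4 * H.edgeFinset.card : ℕ) : ℝ) ≤ ((S.card * (S.card + r) : ℕ) : ℝ) := by
      exact_mod_cast hkey
    push_cast at h4
    rw [hSr] at h4
    linarith
  have hHpos : (0 : ℝ) ≤ (H.edgeFinset.card : ℝ) := Nat.cast_nonneg _
  nlinarith [hx1, hx2, hxn, hE, hEH, hkeyR, hL'deg, hnr, hnR, hs2, hs0.le, hs8,
    mul_le_mul_of_nonneg_right hnr (by positivity : (0:ℝ) ≤ (n:ℝ)),
    mul_le_mul_of_nonneg_right hx1 (by positivity : (0:ℝ) ≤ (n:ℝ)),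
    sq_nonneg ((t:ℝ) - s * n), mul_nonneg hs0.le (Nat.cast_nonneg n)]
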